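/- For every β ∈ ℤ, the bilinear form c_{n,β} on 𝔡 is a Lie algebra 2-cocycle: c_{n,β}(D₁, D₂) = −c_{n,β}(D₂, D₁) for all D₁, D₂ ∈ 𝔡, and c_{n,β}([D₁, D₂], D₃) + c_{n,β}([D₂, D₃], D₁) + c_{n,β}([D₃, D₁], D₂) = 0 for all D₁, D₂, D₃ ∈ 𝔡. -/

import Mathlib

noncomputable section

/-- `K = ℂ((z))`, the field of formal Laurent series over `ℂ`. -/
abbrev K : Type := LaurentSeries ℂ

/-- The formal derivative of a Laurent series. -/
def fd (f : K) : K :=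
  ⟨fun k => ((k + 1 : ℤ) : ℂ) * f.coeff (k + 1), by
    apply Set.IsPWO.mono (f.isPWO_support.image_of_monotone
      (f := fun x => x - 1) (fun _ _ h => sub_le_sub_right h 1))
    intro k hk
    have : f.coeff (k + 1) ≠ 0 := by
      intro h
      simp [Function.mem_support, h] at hk
    exact ⟨k + 1, this, by ring⟩⟩

open LaurentPolynomial

/-- The ring `R = ℂ[z, z⁻¹]` of Laurent polynomials. -/
abbrev Rl : Type := LaurentPolynomial ℂ

/-- The inclusion `R = ℂ[z, z⁻¹] ⊆ K`. -/
def toK (f : Rl) : K :=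
  ⟨fun k => f.coeff k, by
    refine (f.coeff.support.finite_toSet.isPWO).mono (fun k hk => ?_)
    simpa [Finsupp.mem_support_iff] using hk⟩

/-- The residue of a Laurent series: the coefficient of `z⁻¹`. -/
def Res (f : K) : ℂ := f.coeff (-1)

/-- The formal derivative of a Laurent polynomial. -/
def rd (f : Rl) : Rl :=
  f.coeff.sum fun m a => (AddMonoidAlgebra.ofCoeff (Finsupp.single (m - 1) ((m : ℂ) * a)) : Rl)

/-- The entrywise formal derivative of a matrix of Laurent polynomials. -/
def matD {n : ℕ} (A : Matrix (Fin n) (Fin n) Rl) : Matrix (Fin n) (Fin n) Rl :=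
  fun i j => rd (A i j)

/-- The bracket `[(A,h),(B,k)] = (AB − BA + h·B′ − k·A′, h·k′ − k·h′)` on
`𝔡 = Matₙ(R) × R`, corresponding to the commutator of the associated endomorphisms
`v ↦ A·v + h • v′` of `V = Kⁿ`. -/
def dBracket {n : ℕ} (D₁ D₂ : Matrix (Fin n) (Fin n) Rl × Rl) :
    Matrix (Fin n) (Fin n) Rl × Rl :=
  (D₁.1 * D₂.1 - D₂.1 * D₁.1 + D₁.2 • matD D₂.1 - D₂.2 • matD D₁.1,
    D₁.2 * rd D₂.2 - D₂.2 * rd D₁.2)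

/-- The bilinear form
`c_{n,β}((A,h),(B,k)) = Res( Tr(A·B′) + ((1−2β)/2)(h″·Tr B − k″·Tr A) + (n(1−6β+6β²)/12)(h‴k − k‴h) )`
on `𝔡`. -/
def cnb (n : ℕ) (β : ℤ) (D₁ D₂ : Matrix (Fin n) (Fin n) Rl × Rl) : ℂ :=
  Res ((∑ i, ∑ j, toK (D₁.1 i j) * fd (toK (D₂.1 j i)))
    + (((1 : ℂ) - 2 * (β : ℂ)) / 2) •
        (fd (fd (toK D₁.2)) * (∑ i, toK (D₂.1 i i))
          - fd (fd (toK D₂.2)) * (∑ i, toK (D₁.1 i i)))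
    + (((n : ℂ) * (1 - 6 * (β : ℂ) + 6 * (β : ℂ) ^ 2)) / 12) •
        (fd (fd (fd (toK D₁.2))) * toK D₂.2 - fd (fd (fd (toK D₂.2))) * toK D₁.2))

-- basic lemmas
lemma toK_coeff (f : Rl) (k : ℤ) : (toK f).coeff k = f.coeff k := rfl

lemma fd_coeff (f : K) (k : ℤ) : (fd f).coeff k = ((k+1 : ℤ) : ℂ) * f.coeff (k+1) := rfl

lemma toK_add (f g : Rl) : toK (f + g) = toK f + toK g := by
  ext k; exact rfl

lemma toK_smul (c : ℂ) (f : Rl) : toK (c • f) = c • toK f := by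
  ext k; exact rfl

def sg (m : ℤ) (a : ℂ) : Rl := AddMonoidAlgebra.single m a

lemma toK_single (m : ℤ) (a : ℂ) : toK (sg m a) = HahnSeries.single m a := by
  ext k
  rw [toK_coeff, sg, AddMonoidAlgebra.coeff_single, Finsupp.single_apply, HahnSeries.coeff_single]
  by_cases h : k = m <;> simp [h]
  exact fun h' => absurd h'.symm h

lemma toK_zero : toK 0 = 0 := by ext k; simp [toK_coeff]

lemma toK_single_single (m l : ℤ) (a b : ℂ) :
    toK (sg m a * sg l b) = toK (sg m a) * toK (sg l b) := by
  have h1 : sg m a * sg l b = sg (m+l) (a*b) := AddMonoidAlgebra.single_mul_single _ _ _ _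
  rw [h1, toK_single, toK_single, toK_single, HahnSeries.single_mul_single]

def toKhom : Rl →+ K := AddMonoidHom.mk' toK toK_add

lemma toK_single_mul (m : ℤ) (a : ℂ) (g : Rl) :
    toK (sg m a * g) = toK (sg m a) * toK g := by
  have h : toKhom.comp (AddMonoidHom.mulLeft (sg m a))
      = (AddMonoidHom.mulLeft (toK (sg m a))).comp toKhom := by
    refine AddMonoidAlgebra.addHom_ext' (fun l => AddMonoidHom.ext (fun b => ?_))
    exact toK_single_single m l a b
  exact DFunLike.congr_fun h g

lemma toK_mul (f g : Rl) : toK (f * g) = toK f * toK g := by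
  have h : toKhom.comp (AddMonoidHom.mulRight g)
      = (AddMonoidHom.mulRight (toK g)).comp toKhom := by
    refine AddMonoidAlgebra.addHom_ext' (fun m => AddMonoidHom.ext (fun a => ?_))
    exact toK_single_mul m a g
  exact DFunLike.congr_fun h f

lemma rd_apply (f : Rl) (k : ℤ) : (rd f).coeff k = ((k+1 : ℤ) : ℂ) * f.coeff (k+1) := by
  rw [rd, AddMonoidAlgebra.coeff_finsuppSum, Finsupp.sum_apply]
  simp only [AddMonoidAlgebra.coeff_ofCoeff]
  have : ∀ m ∈ f.coeff.support, (Finsupp.single (m-1) ((m:ℂ) * f.coeff m) : ℤ →₀ ℂ) k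
      = if k + 1 = m then ((k+1:ℤ):ℂ) * f.coeff m else 0 := by
    intro m _
    rw [Finsupp.single_apply]
    by_cases h : k + 1 = m
    · simp [h.symm, show m - 1 = k by omega]
    · rw [if_neg h, if_neg (by omega)]
  rw [Finsupp.sum, Finset.sum_congr rfl this]
  by_cases h : k + 1 ∈ f.coeff.support
  · rw [Finset.sum_eq_single_of_mem _ h (by intro b _ hb; rw [if_neg (by omega)]), if_pos rfl]
  · rw [Finset.sum_eq_zero (by intro b hb; rw [if_neg]; rintro rfl; exact h hb)]
    rw [Finsupp.notMem_support_iff.mp h, mul_zero]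

lemma fd_toK (f : Rl) : fd (toK f) = toK (rd f) := by
  ext k; rw [fd_coeff, toK_coeff, toK_coeff, rd_apply]

def resR (f : Rl) : ℂ := f.coeff (-1)

lemma Res_toK (f : Rl) : Res (toK f) = resR f := rfl

lemma resR_rd (f : Rl) : resR (rd f) = 0 := by
  rw [resR, rd_apply]; norm_num

lemma resR_add (f g : Rl) : resR (f + g) = resR f + resR g := rfl

lemma rd_add (f g : Rl) : rd (f + g) = rd f + rd g := by
  unfold rd; rw [AddMonoidAlgebra.coeff_add]
  exact Finsupp.sum_add_index' (fun m => by simp) (fun m a b => by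
    rw [mul_add, Finsupp.single_add, AddMonoidAlgebra.ofCoeff_add])

def rdhom : Rl →+ Rl := AddMonoidHom.mk' rd rd_add

lemma rd_single (m : ℤ) (a : ℂ) : rd (sg m a) = sg (m-1) ((m:ℂ) * a) := by
  unfold rd sg; rw [AddMonoidAlgebra.coeff_single, Finsupp.sum_single_index (by simp)]; rfl

lemma rd_zero : rd 0 = 0 := by
  unfold rd; rw [AddMonoidAlgebra.coeff_zero, Finsupp.sum_zero_index]

lemma rd_single_single (m l : ℤ) (a b : ℂ) :
    rd (sg m a * sg l b) = rd (sg m a) * sg l b + sg m a * rd (sg l b) := by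
  have h1 : sg m a * sg l b = sg (m+l) (a*b) := AddMonoidAlgebra.single_mul_single _ _ _ _
  have h2 : sg (m-1) ((m:ℂ)*a) * sg l b = sg (m-1+l) (((m:ℂ)*a)*b) :=
    AddMonoidAlgebra.single_mul_single _ _ _ _
  have h3 : sg m a * sg (l-1) ((l:ℂ)*b) = sg (m+(l-1)) (a*((l:ℂ)*b)) :=
    AddMonoidAlgebra.single_mul_single _ _ _ _
  rw [h1, rd_single, rd_single, rd_single, h2, h3]
  have e1 : m - 1 + l = m + l - 1 := by ring
  have e2 : m + (l - 1) = m + l - 1 := by ring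
  rw [e1, e2]
  have : (sg (m+l-1) (((m:ℂ)*a)*b)) + (sg (m+l-1) (a*((l:ℂ)*b)))
      = sg (m+l-1) ((((m:ℂ)*a)*b) + (a*((l:ℂ)*b))) := (AddMonoidAlgebra.single_add _ _ _).symm
  rw [this]
  congr 1
  push_cast
  ring

lemma rd_single_mul (m : ℤ) (a : ℂ) (g : Rl) :
    rd (sg m a * g) = rd (sg m a) * g + sg m a * rd g := by
  have h : rdhom.comp (AddMonoidHom.mulLeft (sg m a))
      = (AddMonoidHom.mulLeft (rd (sg m a)))
        + (AddMonoidHom.mulLeft (sg m a)).comp rdhom := by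
    refine AddMonoidAlgebra.addHom_ext' (fun l => AddMonoidHom.ext (fun b => ?_))
    exact rd_single_single m l a b
  exact DFunLike.congr_fun h g

lemma rd_mul (f g : Rl) : rd (f * g) = rd f * g + f * rd g := by
  have h : rdhom.comp (AddMonoidHom.mulRight g)
      = (AddMonoidHom.mulRight g).comp rdhom + AddMonoidHom.mulRight (rd g) := by
    refine AddMonoidAlgebra.addHom_ext' (fun m => AddMonoidHom.ext (fun a => ?_))
    exact rd_single_mul m a g
  exact DFunLike.congr_fun h f

lemma rd_sum {α : Type*} (s : Finset α) (f : α → Rl) :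
    rd (∑ i ∈ s, f i) = ∑ i ∈ s, rd (f i) := map_sum rdhom f s

lemma rd_sub (f g : Rl) : rd (f - g) = rd f - rd g := map_sub rdhom f g

lemma toK_sub (f g : Rl) : toK (f - g) = toK f - toK g := map_sub toKhom f g

lemma toK_sum {α : Type*} (s : Finset α) (f : α → Rl) :
    toK (∑ i ∈ s, f i) = ∑ i ∈ s, toK (f i) := map_sum toKhom f s

lemma resR_sum {α : Type*} (s : Finset α) (f : α → Rl) :
    resR (∑ i ∈ s, f i) = ∑ i ∈ s, resR (f i) :=
  map_sum (AddMonoidHom.mk' resR resR_add) f s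

/-- scalar constant as a Laurent polynomial -/
def cc (c : ℂ) : Rl := sg 0 c

lemma rd_cc (c : ℂ) : rd (cc c) = 0 := by
  rw [cc, rd_single]; simp [sg]

lemma toK_cc (c : ℂ) : toK (cc c) = HahnSeries.single 0 c := toK_single 0 c

lemma toK_cc_mul (c : ℂ) (f : Rl) : toK (cc c * f) = c • toK f := by
  rw [toK_mul, cc, toK_single, HahnSeries.single_zero_mul_eq_smul]

variable {n : ℕ}

/-- trace -/
def trc (A : Matrix (Fin n) (Fin n) Rl) : Rl := ∑ i, A i i

/-- Tr(A B C) as a triple sum -/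
def Pt (A B C : Matrix (Fin n) (Fin n) Rl) : Rl :=
  ∑ i, ∑ j, ∑ k, A i j * B j k * C k i

/-- Tr(A' B') -/
def tS (A B : Matrix (Fin n) (Fin n) Rl) : Rl :=
  ∑ i, ∑ j, rd (A i j) * rd (B j i)

/-- the mirror of `cnb` inside the Laurent polynomial ring -/
def cE (n : ℕ) (β : ℤ) (D₁ D₂ : Matrix (Fin n) (Fin n) Rl × Rl) : Rl :=
  (∑ i, ∑ j, D₁.1 i j * rd (D₂.1 j i))
    + cc (((1 : ℂ) - 2 * (β : ℂ)) / 2) *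
        (rd (rd D₁.2) * trc D₂.1 - rd (rd D₂.2) * trc D₁.1)
    + cc (((n : ℂ) * (1 - 6 * (β : ℂ) + 6 * (β : ℂ) ^ 2)) / 12) *
        (rd (rd (rd D₁.2)) * D₂.2 - rd (rd (rd D₂.2)) * D₁.2)

lemma cnb_eq (n : ℕ) (β : ℤ) (D₁ D₂ : Matrix (Fin n) (Fin n) Rl × Rl) :
    cnb n β D₁ D₂ = resR (cE n β D₁ D₂) := by
  rw [← Res_toK]
  unfold cnb
  congr 1
  simp only [cE, trc, toK_add, toK_sub, toK_mul, toK_sum, toK_cc,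
    HahnSeries.single_zero_mul_eq_smul, ← fd_toK]

lemma sum3_rot (f : Fin n → Fin n → Fin n → Rl) :
    (∑ i, ∑ j, ∑ k, f i j k) = ∑ i, ∑ j, ∑ k, f k i j := by
  rw [Finset.sum_comm]
  exact Finset.sum_congr rfl fun _ _ => Finset.sum_comm

lemma Pt_rot (A B C : Matrix (Fin n) (Fin n) Rl) : Pt A B C = Pt C A B := by
  unfold Pt
  rw [sum3_rot, sum3_rot]
  exact Finset.sum_congr rfl fun _ _ => Finset.sum_congr rfl fun _ _ =>
    Finset.sum_congr rfl fun _ _ => by ring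

lemma tS_symm (A B : Matrix (Fin n) (Fin n) Rl) : tS A B = tS B A := by
  unfold tS
  rw [Finset.sum_comm]
  exact Finset.sum_congr rfl fun _ _ => Finset.sum_congr rfl fun _ _ => mul_comm _ _

lemma trc_mul_comm (A B : Matrix (Fin n) (Fin n) Rl) : trc (A * B) = trc (B * A) := by
  simp only [trc, Matrix.mul_apply]
  rw [Finset.sum_comm]
  exact Finset.sum_congr rfl fun _ _ => Finset.sum_congr rfl fun _ _ => mul_comm _ _

lemma TM_mul (A B C : Matrix (Fin n) (Fin n) Rl) :
    (∑ i, ∑ j, (A * B) i j * rd (C j i)) = Pt A B (matD C) := by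
  simp only [Matrix.mul_apply, Finset.sum_mul, Pt, matD]
  refine Finset.sum_congr rfl fun i _ => ?_
  rw [Finset.sum_comm]

lemma rdPt (A B C : Matrix (Fin n) (Fin n) Rl) :
    rd (Pt A B C) = Pt (matD A) B C + Pt A (matD B) C + Pt A B (matD C) := by
  simp only [Pt, matD, rd_sum, rd_mul, ← Finset.sum_add_distrib]
  exact Finset.sum_congr rfl fun _ _ => Finset.sum_congr rfl fun _ _ =>
    Finset.sum_congr rfl fun _ _ => by ring

lemma sumM (A B C : Matrix (Fin n) (Fin n) Rl) (h k : Rl) :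
    (∑ i, ∑ j, (A * B - B * A + h • matD B - k • matD A) i j * rd (C j i))
      = Pt A B (matD C) - Pt B A (matD C) + h * tS B C - k * tS A C := by
  have e : ∀ i j, (A * B - B * A + h • matD B - k • matD A) i j * rd (C j i)
      = (A * B) i j * rd (C j i) - (B * A) i j * rd (C j i)
        + h * (rd (B i j) * rd (C j i)) - k * (rd (A i j) * rd (C j i)) := by
    intro i j
    simp only [Matrix.sub_apply, Matrix.add_apply, Matrix.smul_apply, smul_eq_mul, matD]
    ring
  simp only [e, Finset.sum_add_distrib, Finset.sum_sub_distrib, ← Finset.mul_sum]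
  rw [TM_mul, TM_mul]
  rfl

lemma trcM (A B : Matrix (Fin n) (Fin n) Rl) (h k : Rl) :
    trc (A * B - B * A + h • matD B - k • matD A)
      = h * rd (trc B) - k * rd (trc A) := by
  have e : ∀ i : Fin n, (A * B - B * A + h • matD B - k • matD A) i i
      = (A * B) i i - (B * A) i i + h * rd (B i i) - k * rd (A i i) := by
    intro i
    simp only [Matrix.sub_apply, Matrix.add_apply, Matrix.smul_apply, smul_eq_mul, matD]
  simp only [trc, e, Finset.sum_add_distrib, Finset.sum_sub_distrib, ← Finset.mul_sum,
    ← rd_sum]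
  have h2 : ∑ i, (A * B) i i = ∑ i, (B * A) i i := trc_mul_comm A B
  rw [h2]
  ring

lemma rd_one : rd (1 : Rl) = 0 := by
  rw [show (1 : Rl) = sg 0 1 from AddMonoidAlgebra.one_def, rd_single]
  simp [sg]

lemma rd_two : rd (2 : Rl) = 0 := by
  rw [show (2 : Rl) = 1 + 1 from one_add_one_eq_two.symm, rd_add, rd_one, add_zero]

lemma cE_antisymm (n : ℕ) (β : ℤ) (D₁ D₂ : Matrix (Fin n) (Fin n) Rl × Rl) :
    cE n β D₁ D₂ + cE n β D₂ D₁ = rd (∑ i, ∑ j, D₁.1 i j * D₂.1 j i) := by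
  have hswap : (∑ i, ∑ j, D₂.1 i j * rd (D₁.1 j i))
      = ∑ i, ∑ j, rd (D₁.1 i j) * D₂.1 j i := by
    rw [Finset.sum_comm]
    exact Finset.sum_congr rfl fun _ _ => Finset.sum_congr rfl fun _ _ => mul_comm _ _
  simp only [cE]
  rw [hswap, rd_sum]
  simp only [rd_sum, rd_mul, Finset.sum_add_distrib]
  ring

/-- u(a,b) = a b' - b a' -/
def uu (a b : Rl) : Rl := a * rd b - b * rd a

lemma cE_cocycle (n : ℕ) (β : ℤ) (D₁ D₂ D₃ : Matrix (Fin n) (Fin n) Rl × Rl) :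
    cE n β (dBracket D₁ D₂) D₃ + cE n β (dBracket D₂ D₃) D₁
      + cE n β (dBracket D₃ D₁) D₂
    = rd ((Pt D₁.1 D₂.1 D₃.1 - Pt D₂.1 D₁.1 D₃.1)
      + cc (((1 : ℂ) - 2 * (β : ℂ)) / 2) *
          ((D₁.2 * rd (rd D₂.2) - D₂.2 * rd (rd D₁.2)) * trc D₃.1
            + (D₂.2 * rd (rd D₃.2) - D₃.2 * rd (rd D₂.2)) * trc D₁.1
            + (D₃.2 * rd (rd D₁.2) - D₁.2 * rd (rd D₃.2)) * trc D₂.1)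
      + cc (((n : ℂ) * (1 - 6 * (β : ℂ) + 6 * (β : ℂ) ^ 2)) / 12) *
          ((rd (rd (uu D₁.2 D₂.2)) * D₃.2 - rd (uu D₁.2 D₂.2) * rd D₃.2
              + uu D₁.2 D₂.2 * rd (rd D₃.2))
            + (rd (rd (uu D₂.2 D₃.2)) * D₁.2 - rd (uu D₂.2 D₃.2) * rd D₁.2
              + uu D₂.2 D₃.2 * rd (rd D₁.2))
            + (rd (rd (uu D₃.2 D₁.2)) * D₂.2 - rd (uu D₃.2 D₁.2) * rd D₂.2
              + uu D₃.2 D₁.2 * rd (rd D₂.2))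
            - 2 * (D₁.2 * (rd D₂.2 * rd (rd D₃.2) - rd D₃.2 * rd (rd D₂.2))
              + D₂.2 * (rd D₃.2 * rd (rd D₁.2) - rd D₁.2 * rd (rd D₃.2))
              + D₃.2 * (rd D₁.2 * rd (rd D₂.2) - rd D₂.2 * rd (rd D₁.2))))) := by
  simp only [cE, dBracket, uu]
  rw [sumM, sumM, sumM, trcM, trcM, trcM]
  rw [show Pt D₂.1 D₃.1 (matD D₁.1) = Pt (matD D₁.1) D₂.1 D₃.1 from Pt_rot _ _ _,
    show Pt D₃.1 D₂.1 (matD D₁.1) = Pt D₂.1 (matD D₁.1) D₃.1 from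
      (Pt_rot _ _ _).trans (Pt_rot _ _ _),
    show Pt D₃.1 D₁.1 (matD D₂.1) = Pt D₁.1 (matD D₂.1) D₃.1 from
      (Pt_rot _ _ _).trans (Pt_rot _ _ _),
    show Pt D₁.1 D₃.1 (matD D₂.1) = Pt (matD D₂.1) D₁.1 D₃.1 from Pt_rot _ _ _,
    tS_symm D₃.1 D₁.1, tS_symm D₂.1 D₁.1, tS_symm D₃.1 D₂.1]
  simp only [rd_add, rd_sub, rd_mul, rdPt, rd_cc, rd_two, zero_mul]
  ring


/-- For every `β ∈ ℤ` the bilinear form `c_{n,β}` is a Lie-algebra 2-cocycle on `𝔡`: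
it is antisymmetric and satisfies the cocycle (Jacobi) identity with respect to the
bracket of `𝔡`. -/
theorem cnb_is_two_cocycle (n : ℕ) (hn : 1 ≤ n) (β : ℤ) :
    (∀ D₁ D₂ : Matrix (Fin n) (Fin n) Rl × Rl, cnb n β D₁ D₂ = - cnb n β D₂ D₁) ∧
    (∀ D₁ D₂ D₃ : Matrix (Fin n) (Fin n) Rl × Rl,
      cnb n β (dBracket D₁ D₂) D₃ + cnb n β (dBracket D₂ D₃) D₁
        + cnb n β (dBracket D₃ D₁) D₂ = 0) := by

  constructor
  · intro D₁ D₂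
    have h : cnb n β D₁ D₂ + cnb n β D₂ D₁ = 0 := by
      rw [cnb_eq, cnb_eq, ← resR_add, cE_antisymm, resR_rd]
    exact eq_neg_of_add_eq_zero_left h
  · intro D₁ D₂ D₃
    rw [cnb_eq, cnb_eq, cnb_eq, ← resR_add, ← resR_add, cE_cocycle, resR_rd]

end
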